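/- No simple cycle Cₙ (n ≥ 1) can be obtained as the result of a nontrivial gluing operation applied to two graphs each isomorphic to a simple cycle Cₘ with m < n or to any graphs that are themselves built from smaller cycles; consequently, for any set S of positive integers, the cycles {Cₙ : n ∈ S} form the elemental basis of the closed class they generate. In particular, distinct subsets S yield distinct closed classes. -/

import Mathlib

/-- A finite multigraph: vertices, edges, and an endpoint map assigning to each
edge an unordered pair of vertices (loops and parallel edges allowed). -/
structure MultiGraph where
  V : Type
  E : Type
  [fintV : Fintype V]
  [fintE : Fintype E]
  [decV : DecidableEq V]
  ends : E → Sym2 V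

attribute [instance] MultiGraph.fintV MultiGraph.fintE MultiGraph.decV

/-- An embedding of the multigraph `G` into the multigraph `H` (a subgraph copy). -/
structure Emb (G H : MultiGraph) where
  vmap : G.V → H.V
  emap : G.E → H.E
  vinj : Function.Injective vmap
  einj : Function.Injective emap
  ends_eq : ∀ e, H.ends (emap e) = (G.ends e).map vmap

/-- An isomorphism of multigraphs. -/
structure Iso (G H : MultiGraph) extends Emb G H where
  vsurj : Function.Surjective vmap
  esurj : Function.Surjective emap

/-- `GlueAt G G₁ G₂ Gt j₁ j₂ f₁ f₂` says that `G` is the result of a gluing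
operation applied to `G₁` and `G₂`, identifying the copy `j₁` of `Gt` inside `G₁`
with the copy `j₂` of `Gt` inside `G₂`: `f₁`, `f₂` embed the operands into the
result, they agree exactly on the identified subgraph, and together they cover `G`. -/
def GlueAt (G G₁ G₂ Gt : MultiGraph) (j₁ : Emb Gt G₁) (j₂ : Emb Gt G₂)
    (f₁ : Emb G₁ G) (f₂ : Emb G₂ G) : Prop :=
  (∀ x, f₁.vmap (j₁.vmap x) = f₂.vmap (j₂.vmap x)) ∧
  (∀ e, f₁.emap (j₁.emap e) = f₂.emap (j₂.emap e)) ∧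
  (∀ v, (∃ a, f₁.vmap a = v) ∨ (∃ b, f₂.vmap b = v)) ∧
  (∀ e, (∃ a, f₁.emap a = e) ∨ (∃ b, f₂.emap b = e)) ∧
  (∀ a b, f₁.vmap a = f₂.vmap b → ∃ x, j₁.vmap x = a ∧ j₂.vmap x = b) ∧
  (∀ a b, f₁.emap a = f₂.emap b → ∃ x, j₁.emap x = a ∧ j₂.emap x = b)

/-- `G` is a result of a gluing operation applied to `G₁` and `G₂` with gluing
subgraph `Gt`. -/
def IsGluing (G G₁ G₂ Gt : MultiGraph) : Prop :=
  ∃ (j₁ : Emb Gt G₁) (j₂ : Emb Gt G₂) (f₁ : Emb G₁ G) (f₂ : Emb G₂ G),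
    GlueAt G G₁ G₂ Gt j₁ j₂ f₁ f₂

/-- A nontrivial gluing: neither identified subgraph is the whole operand. -/
def IsNontrivialGluing (G G₁ G₂ Gt : MultiGraph) : Prop :=
  ∃ (j₁ : Emb Gt G₁) (j₂ : Emb Gt G₂) (f₁ : Emb G₁ G) (f₂ : Emb G₂ G),
    GlueAt G G₁ G₂ Gt j₁ j₂ f₁ f₂ ∧
    ¬ (Function.Surjective j₁.vmap ∧ Function.Surjective j₁.emap) ∧
    ¬ (Function.Surjective j₂.vmap ∧ Function.Surjective j₂.emap)

/-- `O n`: the empty (edgeless) graph on `n` vertices. -/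
abbrev O (n : ℕ) : MultiGraph := { V := Fin n, E := Empty, ends := fun e => e.elim }

/-- `K₂`: a single edge on two vertices. -/
abbrev K2 : MultiGraph := { V := Fin 2, E := Fin 1, ends := fun _ => s((0 : Fin 2), (1 : Fin 2)) }

/-- `CycleG n`: the simple cycle on `n` vertices (`CycleG 1` is a loop,
`CycleG 2` a pair of parallel edges). -/
def CycleG (n : ℕ) : MultiGraph :=
  { V := Fin n, E := Fin n,
    ends := fun e => s(e, ⟨(e.val + 1) % n, Nat.mod_lt _ e.pos⟩) }

/-- `C₁`: a single vertex with a loop. -/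
abbrev C1 : MultiGraph := CycleG 1

/-- Number of occurrences of `v` among the two endpoints in an unordered pair. -/
def vcount {α : Type} [DecidableEq α] (v : α) : Sym2 α → ℕ :=
  Sym2.lift ⟨fun a b => (if a = v then 1 else 0) + (if b = v then 1 else 0),
    fun _ _ => add_comm _ _⟩

/-- Degree of a vertex in a multigraph (a loop contributes 2). -/
def MultiGraph.degree (G : MultiGraph) (v : G.V) : ℕ := ∑ e : G.E, vcount v (G.ends e)

/-- Adjacency in a multigraph. -/
def MultiGraph.Adj (G : MultiGraph) (v w : G.V) : Prop := ∃ e, G.ends e = s(v, w)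

/-- Connectivity of a multigraph. -/
def MultiGraph.Connected (G : MultiGraph) : Prop :=
  Nonempty G.V ∧ ∀ v w, Relation.ReflTransGen G.Adj v w

/-- A graph has a cycle iff it contains a subgraph isomorphic to some `CycleG n`,
`n ≥ 1` (this includes loops and pairs of parallel edges). -/
def HasCycle (G : MultiGraph) : Prop := ∃ n, 1 ≤ n ∧ Nonempty (Emb (CycleG n) G)

/-- A Hamiltonian graph: it contains a spanning cycle. -/
def Hamiltonian (G : MultiGraph) : Prop :=
  ∃ n, 1 ≤ n ∧ ∃ f : Emb (CycleG n) G, Function.Surjective f.vmap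

/-- The class of graphs constructible from (isomorphic copies of) graphs in `B`
by gluing operations whose gluing subgraphs lie in `T`. -/
inductive GeneratesW (B T : Set MultiGraph) : MultiGraph → Prop
  | base {H G : MultiGraph} : B H → Iso H G → GeneratesW B T G
  | glue {G G₁ G₂ Gt : MultiGraph} : GeneratesW B T G₁ → GeneratesW B T G₂ →
      T Gt → IsGluing G G₁ G₂ Gt → GeneratesW B T G

/-- The closure of a set of graphs under arbitrary gluing operations. -/
def Generates (B : Set MultiGraph) : Set MultiGraph := {G | GeneratesW B Set.univ G}

/-- A class of graphs closed under isomorphism. -/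
def IsoClosed (C : Set MultiGraph) : Prop := ∀ G H, G ∈ C → Iso G H → H ∈ C

/-- A closed class of graphs: closed under isomorphism and gluing operations. -/
def ClosedClass (C : Set MultiGraph) : Prop :=
  IsoClosed C ∧ ∀ G G₁ G₂ Gt, G₁ ∈ C → G₂ ∈ C → IsGluing G G₁ G₂ Gt → G ∈ C

/-- The set of all graphs isomorphic to a cycle `Cₙ` with `n ∈ S`. -/
def CycleSet (S : Set ℕ) : Set MultiGraph := {G | ∃ n ∈ S, Nonempty (Iso (CycleG n) G)}

/-- `B` is the elemental basis of the closed class `C`: an inclusion-minimal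
complete (isomorphism-closed) generating system for `C`. -/
def ElementalBasis (C B : Set MultiGraph) : Prop :=
  B ⊆ C ∧ IsoClosed B ∧ Generates B = C ∧
    ∀ B' ⊆ B, IsoClosed B' → Generates B' = C → B' = B

/- ### Auxiliary development -/

section Aux

open Function Finset

lemma vcount_mk {α : Type} [DecidableEq α] (v a b : α) :
    vcount v s(a, b) = (if a = v then 1 else 0) + (if b = v then 1 else 0) := rfl

lemma vcount_map {α β : Type} [DecidableEq α] [DecidableEq β] {f : α → β}
    (hf : Function.Injective f) (v : α) (s : Sym2 α) :
    vcount (f v) (s.map f) = vcount v s := by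
  induction s using Sym2.ind with
  | _ a b => simp [vcount_mk, hf.eq_iff]

lemma one_le_vcount_of_mem {α : Type} [DecidableEq α] {v : α} {s : Sym2 α}
    (h : v ∈ s) : 1 ≤ vcount v s := by
  induction s using Sym2.ind with
  | _ a b =>
    rw [Sym2.mem_iff] at h
    rcases h with h | h <;> simp [vcount_mk, h]

lemma exists_mem_sym2 {α : Type} (s : Sym2 α) : ∃ a, a ∈ s := by
  induction s using Sym2.ind with
  | _ a b => exact ⟨a, Sym2.mem_mk_left a b⟩

lemma degree_le_of_emb {G H : MultiGraph} (f : Emb G H) (v : G.V) :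
    G.degree v ≤ H.degree (f.vmap v) := by
  classical
  unfold MultiGraph.degree
  have h1 : ∑ e : G.E, vcount v (G.ends e)
      = ∑ e ∈ Finset.univ.image f.emap, vcount (f.vmap v) (H.ends e) := by
    rw [Finset.sum_image (fun a _ b _ h => f.einj h)]
    refine Finset.sum_congr rfl fun e _ => ?_
    rw [f.ends_eq, vcount_map f.vinj]
  rw [h1]
  exact Finset.sum_le_sum_of_subset (Finset.subset_univ _)

def Iso.refl (G : MultiGraph) : Iso G G :=
  ⟨⟨id, id, fun _ _ h => h, fun _ _ h => h, fun e => by simp⟩,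
    fun v => ⟨v, rfl⟩, fun e => ⟨e, rfl⟩⟩

def Emb.comp {G H K : MultiGraph} (f : Emb G H) (g : Emb H K) : Emb G K where
  vmap := g.vmap ∘ f.vmap
  emap := g.emap ∘ f.emap
  vinj := g.vinj.comp f.vinj
  einj := g.einj.comp f.einj
  ends_eq := fun e => by
    simp only [Function.comp_apply, g.ends_eq, f.ends_eq, Sym2.map_map]

def Iso.comp {G H K : MultiGraph} (f : Iso G H) (g : Iso H K) : Iso G K :=
  ⟨f.toEmb.comp g.toEmb, g.vsurj.comp f.vsurj, g.esurj.comp f.esurj⟩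

noncomputable def Iso.symm {G H : MultiGraph} (i : Iso G H) : Iso H G := by
  let ve : G.V ≃ H.V := Equiv.ofBijective i.vmap ⟨i.vinj, i.vsurj⟩
  let ee : G.E ≃ H.E := Equiv.ofBijective i.emap ⟨i.einj, i.esurj⟩
  refine ⟨⟨ve.symm, ee.symm, ve.symm.injective, ee.symm.injective, fun e => ?_⟩,
    ve.symm.surjective, ee.symm.surjective⟩
  have h1 : i.emap (ee.symm e) = e := ee.apply_symm_apply e
  have h2 : H.ends e = (G.ends (ee.symm e)).map i.vmap := by
    conv_lhs => rw [← h1, i.ends_eq]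
  rw [h2, Sym2.map_map]
  have : (⇑ve.symm ∘ i.vmap) = id := by
    funext a; exact ve.symm_apply_apply a
  rw [this, Sym2.map_id, id_eq]

lemma Iso.symm_vmap_vmap {G H : MultiGraph} (i : Iso G H) (a : G.V) :
    i.symm.vmap (i.vmap a) = a :=
  (Equiv.ofBijective i.vmap ⟨i.vinj, i.vsurj⟩).symm_apply_apply a

lemma iso_degree {G H : MultiGraph} (i : Iso G H) (a : G.V) :
    H.degree (i.vmap a) = G.degree a := by
  refine le_antisymm ?_ (degree_le_of_emb i.toEmb a)
  have := degree_le_of_emb i.symm.toEmb (i.vmap a)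
  rwa [Iso.symm_vmap_vmap] at this

lemma adj_of_emb {G H : MultiGraph} (f : Emb G H) {a b : G.V} (h : G.Adj a b) :
    H.Adj (f.vmap a) (f.vmap b) := by
  obtain ⟨e, he⟩ := h
  exact ⟨f.emap e, by rw [f.ends_eq, he, Sym2.map_pair_eq]⟩

lemma connected_of_iso {G H : MultiGraph} (i : Iso G H) (h : G.Connected) :
    H.Connected := by
  obtain ⟨⟨a0⟩, hr⟩ := h
  refine ⟨⟨i.vmap a0⟩, fun v w => ?_⟩
  obtain ⟨a, rfl⟩ := i.vsurj v
  obtain ⟨b, rfl⟩ := i.vsurj w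
  exact Relation.ReflTransGen.lift i.vmap (fun x y hxy => adj_of_emb i.toEmb hxy) a b (hr a b)

end Aux
section CycleFacts

lemma cycle_ends {n : ℕ} [NeZero n] (e : Fin n) :
    (CycleG n).ends e = s(e, e + 1) := by
  show s(e, (⟨(e.val + 1) % n, _⟩ : Fin n)) = s(e, e + 1)
  have h2 : (⟨(e.val + 1) % n, Nat.mod_lt _ e.pos⟩ : Fin n) = e + 1 := by
    apply Fin.ext
    show (e.val + 1) % n = (e.val + (1 : Fin n).val) % n
    have h1 : (1 : Fin n).val = 1 % n := rfl
    rw [h1, Nat.add_mod_mod]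
  rw [h2]

lemma cycle_degree {n : ℕ} (hn : 1 ≤ n) (v : Fin n) :
    (CycleG n).degree v = 2 := by
  haveI : NeZero n := ⟨by omega⟩
  show ∑ e : Fin n, vcount v ((CycleG n).ends e) = 2
  have h : ∀ e : Fin n, vcount v ((CycleG n).ends e)
      = (if e = v then 1 else 0) + (if e = v - 1 then 1 else 0) := by
    intro e
    rw [cycle_ends, vcount_mk]
    congr 1
    simp [eq_sub_iff_add_eq]
  rw [Finset.sum_congr rfl fun e _ => h e, Finset.sum_add_distrib]
  simp

open Fin.NatCast in
lemma cycle_connected {n : ℕ} (hn : 1 ≤ n) : (CycleG n).Connected := by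
  haveI : NeZero n := ⟨by omega⟩
  have key : ∀ (v : Fin n) (k : ℕ),
      Relation.ReflTransGen (CycleG n).Adj v (v + (k : Fin n)) := by
    intro v k
    induction k with
    | zero => simpa using Relation.ReflTransGen.refl
    | succ k ih =>
      refine Relation.ReflTransGen.tail ih ?_
      have h2 : ((k + 1 : ℕ) : Fin n) = (k : Fin n) + 1 := by push_cast; ring
      rw [h2, ← add_assoc]
      exact ⟨v + (k : Fin n), cycle_ends _⟩
  refine ⟨⟨(0 : Fin n)⟩, ?_⟩
  suffices h : ∀ v w : Fin n, Relation.ReflTransGen (CycleG n).Adj v w from h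
  intro v w
  have := key v (w - v).val
  rwa [Fin.cast_val_eq_self, add_comm, sub_add_cancel] at this

lemma cycle_card (n : ℕ) : Fintype.card (CycleG n).V = n := by
  show Fintype.card (Fin n) = n
  exact Fintype.card_fin n

lemma cycle_iso_eq {m n : ℕ} (i : Iso (CycleG m) (CycleG n)) : m = n := by
  have := Fintype.card_congr (Equiv.ofBijective i.vmap ⟨i.vinj, i.vsurj⟩)
  rwa [cycle_card, cycle_card] at this

end CycleFacts
section GoodFacts

/-- Every vertex has degree at least 2, and there is a vertex. -/
def Good (G : MultiGraph) : Prop := Nonempty G.V ∧ ∀ v, 2 ≤ G.degree v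

lemma good_cycle {n : ℕ} (hn : 1 ≤ n) : Good (CycleG n) :=
  ⟨⟨(⟨0, by omega⟩ : Fin n)⟩, fun v => by exact (cycle_degree hn v).ge⟩

lemma good_of_iso {G H : MultiGraph} (h : Good G) (i : Iso G H) : Good H := by
  obtain ⟨⟨a⟩, hd⟩ := h
  refine ⟨⟨i.vmap a⟩, fun v => ?_⟩
  obtain ⟨b, rfl⟩ := i.vsurj v
  exact le_trans (hd b) (degree_le_of_emb i.toEmb b)

lemma good_generates {B T : Set MultiGraph} (hB : ∀ H ∈ B, Good H)
    {G : MultiGraph} (hG : GeneratesW B T G) : Good G := by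
  induction hG with
  | base hH i => exact good_of_iso (hB _ hH) i
  | glue h₁ h₂ hT hglue ih₁ ih₂ =>
    obtain ⟨j₁, j₂, f₁, f₂, hv, he, hcovV, hcovE, hsepV, hsepE⟩ := hglue
    obtain ⟨⟨a⟩, hd₁⟩ := ih₁
    refine ⟨⟨f₁.vmap a⟩, fun v => ?_⟩
    rcases hcovV v with ⟨b, rfl⟩ | ⟨b, rfl⟩
    · exact le_trans (hd₁ b) (degree_le_of_emb f₁ b)
    · exact le_trans (ih₂.2 b) (degree_le_of_emb f₂ b)

lemma good_cycleSet {S : Set ℕ} (hS : ∀ n ∈ S, 1 ≤ n) :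
    ∀ H ∈ CycleSet S, Good H := by
  rintro H ⟨n, hn, ⟨i⟩⟩
  exact good_of_iso (good_cycle (hS n hn)) i

lemma glueAt_swap {G G₁ G₂ Gt : MultiGraph} {j₁ : Emb Gt G₁} {j₂ : Emb Gt G₂}
    {f₁ : Emb G₁ G} {f₂ : Emb G₂ G} (h : GlueAt G G₁ G₂ Gt j₁ j₂ f₁ f₂) :
    GlueAt G G₂ G₁ Gt j₂ j₁ f₂ f₁ := by
  obtain ⟨hv, he, hcovV, hcovE, hsepV, hsepE⟩ := h
  exact ⟨fun x => (hv x).symm, fun e => (he e).symm,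
    fun v => (hcovV v).symm, fun e => (hcovE e).symm,
    fun a b hab => by obtain ⟨x, h1, h2⟩ := hsepV b a hab.symm; exact ⟨x, h2, h1⟩,
    fun a b hab => by obtain ⟨x, h1, h2⟩ := hsepE b a hab.symm; exact ⟨x, h2, h1⟩⟩

/-- If the gluing subgraph is all of `G₁`, the result is isomorphic to `G₂`. -/
def isoOfGlueLeftFull {G G₁ G₂ Gt : MultiGraph} {j₁ : Emb Gt G₁} {j₂ : Emb Gt G₂}
    {f₁ : Emb G₁ G} {f₂ : Emb G₂ G} (h : GlueAt G G₁ G₂ Gt j₁ j₂ f₁ f₂)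
    (hjv : Function.Surjective j₁.vmap) (hje : Function.Surjective j₁.emap) :
    Iso G₂ G := by
  obtain ⟨hv, he, hcovV, hcovE, hsepV, hsepE⟩ := h
  refine ⟨f₂, fun v => ?_, fun e => ?_⟩
  · rcases hcovV v with ⟨a, rfl⟩ | hb
    · obtain ⟨x, rfl⟩ := hjv a
      exact ⟨j₂.vmap x, (hv x).symm⟩
    · exact hb
  · rcases hcovE e with ⟨a, rfl⟩ | hb
    · obtain ⟨x, rfl⟩ := hje a
      exact ⟨j₂.emap x, (he x).symm⟩
    · exact hb

end GoodFacts
section Main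

lemma edge_closed {Gt G₁ : MultiGraph} (j : Emb Gt G₁)
    (hdeq : ∀ x, G₁.degree (j.vmap x) ≤ Gt.degree x) :
    ∀ (x : Gt.V) (e₁ : G₁.E), j.vmap x ∈ G₁.ends e₁ → ∃ e', j.emap e' = e₁ := by
  classical
  intro x e₁ hmem
  by_contra hne
  push_neg at hne
  have hnotin : e₁ ∉ Finset.univ.image j.emap := by
    simp only [Finset.mem_image, Finset.mem_univ, true_and, not_exists]
    exact fun e' h' => hne e' h'
  have himg : ∑ e ∈ Finset.univ.image j.emap, vcount (j.vmap x) (G₁.ends e)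
      = Gt.degree x := by
    rw [Finset.sum_image (fun a _ b _ h => j.einj h)]
    exact Finset.sum_congr rfl fun e _ => by rw [j.ends_eq, vcount_map j.vinj]
  have hge : ∑ e ∈ insert e₁ (Finset.univ.image j.emap), vcount (j.vmap x) (G₁.ends e)
      ≤ G₁.degree (j.vmap x) :=
    Finset.sum_le_sum_of_subset (Finset.subset_univ _)
  rw [Finset.sum_insert hnotin, himg] at hge
  have h1 := one_le_vcount_of_mem hmem
  have h2 := hdeq x
  omega

lemma glue_cycle_trivial {G G₁ G₂ Gt : MultiGraph}
    (hconn : G.Connected) (hdeg : ∀ v, G.degree v = 2)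
    (good₁ : Good G₁) (good₂ : Good G₂)
    {j₁ : Emb Gt G₁} {j₂ : Emb Gt G₂} {f₁ : Emb G₁ G} {f₂ : Emb G₂ G}
    (hg : GlueAt G G₁ G₂ Gt j₁ j₂ f₁ f₂) :
    (Function.Surjective j₁.vmap ∧ Function.Surjective j₁.emap) ∨
    (Function.Surjective j₂.vmap ∧ Function.Surjective j₂.emap) := by
  classical
  obtain ⟨hv, he, hcovV, hcovE, hsepV, hsepE⟩ := hg
  obtain ⟨⟨a₀⟩, hd₁⟩ := good₁
  obtain ⟨⟨b₀⟩, hd₂⟩ := good₂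
  -- all degrees in the operands are exactly 2
  have deg₁ : ∀ a, G₁.degree a = 2 := fun a =>
    le_antisymm ((degree_le_of_emb f₁ a).trans (le_of_eq (hdeg _))) (hd₁ a)
  have deg₂ : ∀ b, G₂.degree b = 2 := fun b =>
    le_antisymm ((degree_le_of_emb f₂ b).trans (le_of_eq (hdeg _))) (hd₂ b)
  have degt_le : ∀ x, Gt.degree x ≤ 2 := fun x =>
    (degree_le_of_emb j₁ x).trans (le_of_eq (deg₁ _))
  -- the gluing subgraph has all degrees 2 as well
  have degt : ∀ x : Gt.V, Gt.degree x = 2 := by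
    intro x
    set v := f₁.vmap (j₁.vmap x) with hvdef
    set s₁ : Finset G.E := Finset.univ.image f₁.emap with hs₁def
    set s₂ : Finset G.E := Finset.univ.image f₂.emap with hs₂def
    have hs₁ : ∑ e ∈ s₁, vcount v (G.ends e) = G₁.degree (j₁.vmap x) := by
      rw [hs₁def, Finset.sum_image (fun a _ b _ h => f₁.einj h)]
      exact Finset.sum_congr rfl fun e _ => by
        rw [f₁.ends_eq, hvdef, vcount_map f₁.vinj]
    have hs₂ : ∑ e ∈ s₂, vcount v (G.ends e) = G₂.degree (j₂.vmap x) := by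
      rw [hs₂def, Finset.sum_image (fun a _ b _ h => f₂.einj h)]
      exact Finset.sum_congr rfl fun e _ => by
        rw [f₂.ends_eq, hvdef, hv x, vcount_map f₂.vinj]
    have hinter : s₁ ∩ s₂ = Finset.univ.image (fun e => f₁.emap (j₁.emap e)) := by
      ext e
      simp only [hs₁def, hs₂def, Finset.mem_inter, Finset.mem_image, Finset.mem_univ,
        true_and]
      constructor
      · rintro ⟨⟨a, rfl⟩, ⟨b, hb⟩⟩
        obtain ⟨x', hx1, _⟩ := hsepE a b hb.symm
        exact ⟨x', by rw [hx1]⟩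
      · rintro ⟨x', rfl⟩
        exact ⟨⟨_, rfl⟩, ⟨j₂.emap x', (he x').symm⟩⟩
    have hsi : ∑ e ∈ s₁ ∩ s₂, vcount v (G.ends e) = Gt.degree x := by
      rw [hinter, Finset.sum_image (fun a _ b _ h => j₁.einj (f₁.einj h))]
      exact Finset.sum_congr rfl fun e _ => by
        rw [f₁.ends_eq, hvdef, vcount_map f₁.vinj, j₁.ends_eq, vcount_map j₁.vinj]
    have hunion : ∑ e ∈ s₁ ∪ s₂, vcount v (G.ends e) ≤ 2 := by
      rw [← hdeg v]
      exact Finset.sum_le_sum_of_subset (Finset.subset_univ _)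
    have hie := Finset.sum_union_inter (s₁ := s₁) (s₂ := s₂)
      (f := fun e => vcount v (G.ends e))
    rw [hs₁, hs₂, hsi, deg₁, deg₂] at hie
    have := degt_le x
    omega
  have hdeq₁ : ∀ x, G₁.degree (j₁.vmap x) ≤ Gt.degree x := fun x => by
    rw [deg₁, degt]
  have hdeq₂ : ∀ x, G₂.degree (j₂.vmap x) ≤ Gt.degree x := fun x => by
    rw [deg₂, degt]
  have ec₁ := edge_closed j₁ hdeq₁
  have ec₂ := edge_closed j₂ hdeq₂
  -- the glued set of vertices is closed under adjacency
  set St : Set G.V := Set.range (fun x => f₁.vmap (j₁.vmap x)) with hStdef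
  have closed : ∀ v ∈ St, ∀ w, G.Adj v w → w ∈ St := by
    rintro v ⟨x, rfl⟩ w ⟨e, hse⟩
    rcases hcovE e with ⟨e₁, rfl⟩ | ⟨e₂, rfl⟩
    · rw [f₁.ends_eq] at hse
      have hvmem : f₁.vmap (j₁.vmap x) ∈ Sym2.map f₁.vmap (G₁.ends e₁) := by
        rw [hse]; exact Sym2.mem_mk_left _ _
      obtain ⟨a, ha, hav⟩ := Sym2.mem_map.mp hvmem
      have haj : a = j₁.vmap x := f₁.vinj hav
      obtain ⟨e', rfl⟩ := ec₁ x e₁ (haj ▸ ha)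
      have hw : w ∈ Sym2.map f₁.vmap (G₁.ends (j₁.emap e')) := by
        rw [hse]; exact Sym2.mem_mk_right _ _
      rw [j₁.ends_eq, Sym2.map_map] at hw
      obtain ⟨y, _, hyw⟩ := Sym2.mem_map.mp hw
      exact ⟨y, hyw⟩
    · rw [f₂.ends_eq] at hse
      have hvmem : f₂.vmap (j₂.vmap x) ∈ Sym2.map f₂.vmap (G₂.ends e₂) := by
        rw [hse, ← hv x]; exact Sym2.mem_mk_left _ _
      obtain ⟨a, ha, hav⟩ := Sym2.mem_map.mp hvmem
      have haj : a = j₂.vmap x := f₂.vinj hav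
      obtain ⟨e', rfl⟩ := ec₂ x e₂ (haj ▸ ha)
      have hw : w ∈ Sym2.map f₂.vmap (G₂.ends (j₂.emap e')) := by
        rw [hse]; exact Sym2.mem_mk_right _ _
      rw [j₂.ends_eq, Sym2.map_map] at hw
      obtain ⟨y, _, hyw⟩ := Sym2.mem_map.mp hw
      exact ⟨y, by show f₁.vmap (j₁.vmap y) = w; rw [hv y]; exact hyw⟩
  by_cases hx : Nonempty Gt.V
  · -- the glued set is nonempty, hence everything; both j's are surjective
    obtain ⟨x₀⟩ := hx
    have hall : ∀ w : G.V, w ∈ St := by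
      intro w
      have hreach := hconn.2 (f₁.vmap (j₁.vmap x₀)) w
      induction hreach with
      | refl => exact ⟨x₀, rfl⟩
      | tail _ hbc ih => exact closed _ ih _ hbc
    have vsurj₁ : Function.Surjective j₁.vmap := by
      intro a
      obtain ⟨x, hx'⟩ := hall (f₁.vmap a)
      exact ⟨x, f₁.vinj hx'⟩
    have esurj₁ : Function.Surjective j₁.emap := by
      intro e₁
      obtain ⟨a, ha⟩ := exists_mem_sym2 (G₁.ends e₁)
      obtain ⟨x, rfl⟩ := vsurj₁ a
      exact ec₁ x e₁ ha
    exact Or.inl ⟨vsurj₁, esurj₁⟩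
  · -- the glued set is empty : G would be disconnected
    exfalso
    have hdisj : ∀ a b, f₁.vmap a ≠ f₂.vmap b := by
      intro a b hab
      obtain ⟨x, -, -⟩ := hsepV a b hab
      exact hx ⟨x⟩
    have closed₁ : ∀ v ∈ Set.range f₁.vmap, ∀ w, G.Adj v w →
        w ∈ Set.range f₁.vmap := by
      rintro v ⟨a, rfl⟩ w ⟨e, hse⟩
      rcases hcovE e with ⟨e₁, rfl⟩ | ⟨e₂, rfl⟩
      · rw [f₁.ends_eq] at hse
        have : w ∈ Sym2.map f₁.vmap (G₁.ends e₁) := by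
          rw [hse]; exact Sym2.mem_mk_right _ _
        obtain ⟨y, -, hyw⟩ := Sym2.mem_map.mp this
        exact ⟨y, hyw⟩
      · rw [f₂.ends_eq] at hse
        have : f₁.vmap a ∈ Sym2.map f₂.vmap (G₂.ends e₂) := by
          rw [hse]; exact Sym2.mem_mk_left _ _
        obtain ⟨y, -, hyv⟩ := Sym2.mem_map.mp this
        exact absurd hyv.symm (hdisj a y)
    have hstep : ∀ w, Relation.ReflTransGen G.Adj (f₁.vmap a₀) w →
        w ∈ Set.range f₁.vmap := by
      intro w hreach
      induction hreach with
      | refl => exact ⟨a₀, rfl⟩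
      | tail _ hbc ih => exact closed₁ _ ih _ hbc
    obtain ⟨a, ha⟩ := hstep _ (hconn.2 (f₁.vmap a₀) (f₂.vmap b₀))
    exact hdisj a b₀ ha

end Main
section Final

lemma cycleSet_isoClosed (S : Set ℕ) : IsoClosed (CycleSet S) := by
  rintro G H ⟨n, hn, ⟨i⟩⟩ j
  exact ⟨n, hn, ⟨i.comp j⟩⟩

lemma generates_cycle_mem {B : Set MultiGraph} (hB : ∀ H ∈ B, Good H)
    (hBiso : IsoClosed B) {G : MultiGraph} (hG : GeneratesW B Set.univ G) :
    ∀ n, 1 ≤ n → Iso (CycleG n) G → G ∈ B := by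
  induction hG with
  | base hH i => exact fun n hn _ => hBiso _ _ hH i
  | @glue G G₁ G₂ Gt h₁ h₂ _ hglue ih₁ ih₂ =>
    intro n hn i
    obtain ⟨j₁, j₂, f₁, f₂, hgl⟩ := hglue
    have good₁ := good_generates hB h₁
    have good₂ := good_generates hB h₂
    have hconn : G.Connected := connected_of_iso i (cycle_connected hn)
    have hdeg : ∀ v, G.degree v = 2 := by
      intro v
      obtain ⟨a, rfl⟩ := i.vsurj v
      rw [iso_degree i a]; exact cycle_degree hn a
    rcases glue_cycle_trivial hconn hdeg good₁ good₂ hgl with ⟨hv', he'⟩ | ⟨hv', he'⟩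
    · have iso2 : Iso G₂ G := isoOfGlueLeftFull hgl hv' he'
      exact hBiso G₂ G (ih₂ n hn (i.comp iso2.symm)) iso2
    · have iso1 : Iso G₁ G := isoOfGlueLeftFull (glueAt_swap hgl) hv' he'
      exact hBiso G₁ G (ih₁ n hn (i.comp iso1.symm)) iso1

end Final

theorem cycles_form_elemental_bases :
    (∀ n, 1 ≤ n → ∀ G₁ G₂ Gt : MultiGraph,
        G₁ ∈ Generates (CycleSet {m | 1 ≤ m ∧ m < n}) →
        G₂ ∈ Generates (CycleSet {m | 1 ≤ m ∧ m < n}) →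
        ¬ IsNontrivialGluing (CycleG n) G₁ G₂ Gt) ∧
    (∀ S : Set ℕ, (∀ n ∈ S, 1 ≤ n) →
        ElementalBasis (Generates (CycleSet S)) (CycleSet S)) ∧
    (∀ S T : Set ℕ, (∀ n ∈ S, 1 ≤ n) → (∀ n ∈ T, 1 ≤ n) →
        Generates (CycleSet S) = Generates (CycleSet T) → S = T) := by
  refine ⟨?_, ?_, ?_⟩
  · intro n hn G₁ G₂ Gt hG₁ hG₂ hcontra
    obtain ⟨j₁, j₂, f₁, f₂, hgl, hj₁, hj₂⟩ := hcontra
    have hsmall : ∀ m ∈ {m | 1 ≤ m ∧ m < n}, 1 ≤ m := fun m hm => hm.1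
    have good₁ := good_generates (good_cycleSet hsmall) hG₁
    have good₂ := good_generates (good_cycleSet hsmall) hG₂
    rcases glue_cycle_trivial (cycle_connected hn) (fun v => cycle_degree hn v)
      good₁ good₂ hgl with h | h
    · exact hj₁ h
    · exact hj₂ h
  · intro S hS
    refine ⟨fun G hG => GeneratesW.base hG (Iso.refl G), cycleSet_isoClosed S, rfl, ?_⟩
    intro B' hsub hiso hgen
    apply Set.Subset.antisymm hsub
    rintro G ⟨n, hn, ⟨i⟩⟩
    have hGmem : G ∈ Generates (CycleSet S) :=
      GeneratesW.base (⟨n, hn, ⟨i⟩⟩ : G ∈ CycleSet S) (Iso.refl G)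
    rw [← hgen] at hGmem
    have hB' : ∀ H ∈ B', Good H := fun H hH => good_cycleSet hS H (hsub hH)
    exact generates_cycle_mem hB' hiso hGmem n (hS n hn) i
  · have key : ∀ (S T : Set ℕ), (∀ n ∈ S, 1 ≤ n) → (∀ n ∈ T, 1 ≤ n) →
        Generates (CycleSet S) = Generates (CycleSet T) → S ⊆ T := by
      intro S T hS hT hgen n hn
      have h1 : CycleG n ∈ Generates (CycleSet S) :=
        GeneratesW.base (⟨n, hn, ⟨Iso.refl _⟩⟩ : CycleG n ∈ CycleSet S) (Iso.refl _)
      rw [hgen] at h1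
      have h2 := generates_cycle_mem (good_cycleSet hT) (cycleSet_isoClosed T) h1 n
        (hS n hn) (Iso.refl _)
      obtain ⟨m, hm, ⟨i⟩⟩ := h2
      rwa [cycle_iso_eq i] at hm
    intro S T hS hT hgen
    exact Set.Subset.antisymm (key S T hS hT hgen) (key T S hT hS hgen.symm)
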